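/- The polynomial x^{155} + x^{93} + x^{62} + x^{31} + 1 is irreducible over F_2. -/

import Mathlib

set_option maxRecDepth 10000

open Polynomial

namespace Stmt5Aux

/-- carry-less (GF(2)) multiplication of bit-encoded polynomials, with fuel. -/
def cm : Nat → Nat → Nat → Nat
  | 0, _, _ => 0
  | f+1, a, b => (a % 2) * b ^^^ 2 * cm f (a / 2) b

/-- decode a bit-encoded polynomial, with fuel. -/
noncomputable def toP : Nat → Nat → Polynomial (ZMod 2)
  | 0, _ => 0
  | f+1, a => Polynomial.C ((a % 2 : Nat) : ZMod 2) + toP f (a / 2) * Polynomial.X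

lemma toP_eq (f a : Nat) :
    toP (f+1) a = Polynomial.C ((a % 2 : Nat) : ZMod 2) + toP f (a / 2) * Polynomial.X := rfl

lemma cm_eq (f a b : Nat) : cm (f+1) a b = (a % 2) * b ^^^ 2 * cm f (a / 2) b := rfl

lemma toP_zero : ∀ f, toP f 0 = 0
  | 0 => rfl
  | f+1 => by simp [toP_eq, toP_zero f]

lemma cm_zero : ∀ f b, cm f 0 b = 0
  | 0, _ => rfl
  | f+1, b => by simp [cm_eq, cm_zero f]

lemma toP_xor : ∀ f a b, toP f (a ^^^ b) = toP f a + toP f b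
  | 0, a, b => by simp [toP]
  | f+1, a, b => by
    rw [toP_eq, toP_eq, toP_eq, Nat.xor_div_two, toP_xor f]
    have hc : (((a ^^^ b) % 2 : Nat) : ZMod 2) = ((a % 2 : Nat) : ZMod 2) + ((b % 2 : Nat) : ZMod 2) := by
      rw [Nat.xor_mod_two_eq, ZMod.natCast_mod, ZMod.natCast_mod, ZMod.natCast_mod, Nat.cast_add]
    rw [hc, map_add]
    ring

lemma toP_succ : ∀ f a, a < 2 ^ f → toP (f+1) a = toP f a
  | 0, a, h => by
    interval_cases a
    simp [toP]
  | f+1, a, h => by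
    have h2 : a / 2 < 2 ^ f := Nat.div_lt_of_lt_mul (by rw [← pow_succ']; exact h)
    rw [toP_eq (f+1) a, toP_succ f (a/2) h2, toP_eq f a]

lemma toP_add : ∀ k f a, a < 2 ^ f → toP (f + k) a = toP f a
  | 0, f, a, _ => rfl
  | k+1, f, a, h => by
    have : f + (k+1) = (f + k) + 1 := rfl
    rw [this, toP_succ (f+k) a (lt_of_lt_of_le h (Nat.pow_le_pow_right (by norm_num) (Nat.le_add_right f k))), toP_add k f a h]

lemma toP_le {f F a : Nat} (hle : f ≤ F) (h : a < 2 ^ f) : toP F a = toP f a := by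
  obtain ⟨k, rfl⟩ := Nat.exists_eq_add_of_le hle
  exact toP_add k f a h

lemma toP_two_mul (f c : Nat) : toP (f+1) (2 * c) = toP f c * X := by
  rw [toP_eq, Nat.mul_mod_right, Nat.mul_div_cancel_left c (by norm_num : 0 < 2)]
  simp

lemma toP_cm : ∀ f g a b, b < 2 ^ g → toP (f + g) (cm f a b) = toP f a * toP g b
  | 0, g, a, b, _ => by simp [cm, toP, toP_zero]
  | f+1, g, a, b, hb => by
    have hfg : f + 1 + g = (f + g) + 1 := by omega
    rw [cm_eq, toP_xor, hfg, toP_two_mul (f+g), toP_cm f g (a/2) b hb, toP_eq f a]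
    rcases Nat.mod_two_eq_zero_or_one a with h | h <;> rw [h]
    · rw [Nat.zero_mul, toP_zero]
      simp only [Nat.cast_zero, map_zero]
      ring
    · rw [Nat.one_mul, toP_le (show g ≤ (f+g)+1 by omega) hb]
      simp only [Nat.cast_one, map_one]
      ring

lemma toP_pow2 : ∀ k f, k < f → toP f (2 ^ k) = X ^ k
  | 0, f+1, _ => by simp [toP_eq, toP_zero]
  | k+1, f+1, h => by
    have h1 : 2 ^ (k+1) % 2 = 0 := by simp [Nat.pow_succ, Nat.mul_mod_left]
    have h2 : 2 ^ (k+1) / 2 = 2 ^ k := by rw [Nat.pow_succ, Nat.mul_div_cancel]; norm_num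
    rw [toP_eq, h1, h2, toP_pow2 k f (by omega)]
    simp [pow_succ]

lemma cm_lt : ∀ f e g a b, a < 2 ^ e → b < 2 ^ g → cm f a b < 2 ^ (e + g)
  | 0, e, g, a, b, _, _ => by simp only [cm]; positivity
  | f+1, e, g, a, b, ha, hb => by
    match e with
    | 0 =>
      interval_cases a
      rw [cm_zero]
      positivity
    | e+1 =>
      have h2 : a / 2 < 2 ^ e := Nat.div_lt_of_lt_mul (by rw [← pow_succ']; exact ha)
      have ih := cm_lt f e g (a/2) b h2 hb
      rw [cm_eq]
      apply Nat.xor_lt_two_pow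
      · calc (a % 2) * b ≤ 1 * b := Nat.mul_le_mul_right b (by omega)
          _ < 2 ^ g := by omega
          _ ≤ 2 ^ (e + 1 + g) := Nat.pow_le_pow_right (by norm_num) (by omega)
      · calc 2 * cm f (a/2) b < 2 * 2 ^ (e + g) := by omega
          _ = 2 ^ (e + 1 + g) := by rw [← pow_succ']; congr 1; omega


def fN : Nat := 45671926166590716203768671341278572584015757313

def rvL : List Nat := [0x0, 0x4, 0x10, 0x100, 0x10000, 0x100000000, 0x10000000000000000, 0x100000000000000000000000000000000, 0x20000000000000000000000100, 0x100000002000000040000000800000010000, 0x8000000000000000, 0x40000000000000000000000000000000, 0x2000000000000000000000010, 0x1000000020000000400000008000000100, 0x800000000000, 0x400000000000000000000000, 0x40000000800000010000000200000000, 0x800000010, 0x400000000000000100, 0x100000000000000000000000000000010000, 0x20000000000000000000000000000000, 0x800000000000000000000004, 0x100000002000000040000000800000010, 0x8000000000, 0x40000000000000000000, 0x400000008000000100000002, 0x800000000000000200000004, 0x100000002000000000000000800000010, 0x1000000000000000000000008000000000, 0x2000000040000000000000010000, 0x20000000400000008000000100000000, 0x200000004, 0x40000000000000010, 0x1000000000000000000000000000000100,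 0x2000000000000000000000000000, 0x20000000000000000000000100000002, 0x800000010000000000000000, 0x2000000040000000800000000, 0x20000000000000008000000000, 0x100000002000000000000000800000000000, 0x400000000000000000000002, 0x40000000800000010000000200000004, 0x800000000, 0x400000000000000000, 0x100000000000000000000000000000000000, 0x20000000000000000000000100000000, 0x800000010000000000000004, 0x2000000040000000800000010, 0x20000000000000008000000100, 0x100000002000000000000000800000010000, 0x400000000000000100000002, 0x40000000800000000000000200000004, 0x100000000000000000000000800000000, 0x20000000400000000000000100, 0x2000000040000000800000010000, 0x20000000000000008000000100000000, 0x40000000800000010000000000000004, 0x40000000800000000, 0x1000000000000000400000000000000000, 0x100000002000000000000000000000010000, 0x100000002, 0x10000000000000004, 0x100000000000000000000000000000010, 0x20000000000000000000000000, 0x100000002000000040000000800000000000, 0x8000000100000000, 0x40000000000000010000000000000000, 0x100000002000000000000000000000010, 0x1000000000000000400000008000000000, 0x100000002000000040000000000000010000, 0x400000008000000000000000, 0x800000010000000200000000, 0x2000000000000000800000000, 0x1000000020000000000000008000000000, 0x100000000000000000000000800000010000, 0x20000000400000000000000000000000, 0x40000000000000010000000200000004, 0x100000002000000040000000000000000]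
def sL : List Nat := [0x0, 0x0, 0x0, 0x0, 0x0, 0x0, 0x0, 0x20000000000000008000000100, 0x800000000000, 0x20000000000000000000000100000000, 0x0, 0x2000000000000000800000010, 0x8000000000, 0x2000000000000000000000010000, 0x0, 0x200000000, 0x2000000000000000000000010, 0x0, 0x0, 0x20000000000000008000000100000000, 0x800000000000000200000004, 0x800000000, 0x20000000000000000000000100, 0x0, 0x2, 0x200000000, 0x800000000, 0x20000000000000000000000100, 0x2000000000000000800000010000, 0x8000000000000000, 0x800000000000000000000004, 0x0, 0x0, 0x2000000000000000800000010000, 0x8000000000000002, 0x800000000000000200000004, 0x800000000, 0x8000000000, 0x800000000000, 0x20000000000000000000000100000002, 0x200000000, 0x2000000000000000000000010, 0x0, 0x0, 0x20000000000000008000000100000000, 0x800000000000000200000004, 0x800000000, 0x8000000000, 0x800000000000, 0x20000000000000000000000100000002, 0x200000000, 0x2000000000000000000000010, 0x20000000000000008000000100, 0x800000000000, 0x8000000000000000, 0x800000000000000200000004, 0x2000000000000000000000010, 0x0, 0x2000000000000000800000010000, 0x20000000000000000000000100000002, 0x0, 0x0, 0x20000000000000008000000100, 0x800000000000, 0x20000000000000000000000100000000,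 0x0, 0x2000000000000000800000010, 0x20000000000000000000000100, 0x2000000000000000800000010000, 0x20000000000000000000000100000000, 0x200000000, 0x800000000, 0x8000000000, 0x2000000000000000000000010000, 0x20000000000000008000000100000000, 0x800000000000000000000004, 0x2000000000000000800000010]
def uL : List Nat := [0x0, 0x1, 0xd, 0xd3, 0xa3bf, 0x1, 0x6e2b43274327dc57, 0xb63e4217314aba6c7da43e621735d8fb, 0x1ea59bf0b3ee2411d4b27e1689, 0xdf26a3bf930bdf25df26a3bad47185a2617, 0x4000000080000001, 0x1dc56864e4fb8ad0d0c9f71515a193ef, 0x16c4a872f944d8950f5f289bb, 0xe8c45fcc18cbf9bacbf9b96faee4a1ad1, 0x548bdf67386b, 0x200000004000000000000001, 0xb0e6fa2558737d14df44ac32561cdf5, 0x76e95c651, 0x29c6a0fcc946b2fc67, 0xb51d26163be42d47c9868efb0b55f26df27, 0x4000000080000001, 0x2864fb8aad0c9f7115a193ef, 0x903d67a2e8fb24788fb247a87596af2b, 0x7e4bdc60a9, 0x2a12d9f1b75092cff1bb, 0x80000001, 0x39a42bb19a42bb1f42bb1f35, 0xea1ca6a23277ba0729a8f094ed350e5d,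 0xe591eb5903d63223ecf56596c746791eb, 0x1c35270d61a9386a4e1ab3860d49, 0x200000000000000080000001, 0xcdf44ac3, 0x3376667777fdd4449, 0x8fe0007fe03f8ffff87001c070e1fc08f, 0x1f44a89592b0d61cc39bf37d6fa3, 0x10000000200000004000000080000001, 0x122fb386df670d4870d48bed, 0x14a362af8c55f4b034b06e1df, 0x13c574b1bdd237aa2f648dea99, 0xc2d4df27df265a8fe4c351da8efcc2d1df3, 0x80000001, 0x2b4327df4327dc550c9f7157dc56865, 0x417795cb9, 0x2e77731af35a4214ad, 0x84b34b3eb3e33e37e3763753750f5095097, 0x10000000000000000000000000000001, 0x7cd215dabb1f3483e690aed, 0x1bd2dcd6d112a8872b7112a85, 0x1c9f2fcbf2fcaf0bb08c230827, 0xe375f1bb3e379f1acf8d67c3a84dd428dd5, 0x4000000080000001, 0x1485763e71f34857215d8f9a9a42bb1f, 0xde5dcb95e0b925e59cb9de0d72b80565, 0x1988431e8a5beb7310863d725b, 0x1b1f3e69242b9763abb1e3e615d9, 0x1, 0xcf8dd42612cf8dd1f1ba84b1ba84b3f, 0x339aea4093ee50f4d, 0xe87f00bd550a02ac5f402d554282affeb,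 0xce1a0d49386a3522917cbecf670b86afb39, 0x80000001, 0x5f44ac3912b0e6fb, 0xef8ab4693df1720d27ae2661adf15683, 0x184b54e365d09fbbc24aa31b3f, 0xf9a4ec7d763e42b82bb0d211f34dd8f90af, 0x80000001, 0x84b3e375d4259f1e7c6ea124b3e3751, 0xdcb2e014773972cbc17739724bc17735, 0xd59f941f9417063018cd3acb06334ab37, 0xf44a6fa39be81cdd61cd2b0e895df4412b1, 0x1, 0x21a917d9b522fb3848bece1b, 0x1072461bf9c781c95186ff71f, 0xa7fac242fac243b537c73258976a2b0e5, 0x9f71ad0c4fb8568727de2b4568627dcb433, 0x10000000200000004000000080000001, 0x1e4c2d477930b51d9df2616a85a8ef93, 0xa7b733489a4e8d05c27b73341d520eb9]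
def vL : List Nat := [0x0, 0x3fffffffffffffff00000001fffffffc0000000, 0x6492492492492493db6db6d84924924f6db6db6, 0x6952a54a952a54a8f7efdfbc3468d1a5d3a74e9, 0x51df23be477c8ef85a8eb51fe4c3c9828efd1df, 0x8000000100000000000000040000000, 0x3715a193a193ee2b327dc5687dc56866193ee2b, 0x5b1f210b98a55d3752ae9b1db1f690fcb9aec7d, 0x7a966fc2cfb89046b89047511d4b27e6ceba944, 0x6f9351df16a34c2cc2d5c9879309df205a8930b, 0x400000008000000100000002000000000000000, 0x3b8ad0c9c9f715a14fb8ad0cd0c9f714ad0c9f7, 0x5b12a1cbe5136255513625410f5f289ea1cbf75, 0x74622fe6e4a1a310acbf9a952d1c1accbf9b968, 0x548bdf67386a522e2fb39c370d4a45f2fb39c35, 0x400000008000000100000000000000040000000, 0x161cdf448737d12b958737d1d12b0e6d2b0e6fa, 0x76e95c65e068efd3636e95c5e94c6dd5465e068, 0x538d41f9928d65f8cc9c6a0d50fe64e660aa7b3, 0x5a8e930b1df216a28ef90b5326163be185aef93, 0x100000002000000000000000, 0x2864fb8aad0c9f71b4327dc515a193ec64fb8ad, 0x481eb3d1e440f59f8f58c8e9648f58cc7acf47d,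 0x7e4bdc60a8f92f707b8c953c97b0d1565ee3054, 0x5425b3e36ea1259eb3e26ea284b27c68967f8dd, 0x100000000000000000000000, 0x39a42bb19a42bb1f42bb1f35e690aec5f348576, 0x750e5351f3277ba1a6a3c24d5f3277bdd7cc9de, 0x72c8f5ac81eb19103d596479640f58cfa33c8f5, 0x70d49c35670dd9c235230d4a45f69179a9106a4, 0x8000000100000000000000000000000, 0x337d12b0958737d1737d12b10e6fa2562561cdf, 0x66eccceeeffba88913766674409bb3355573204, 0x47f0003ff01fc7fee3f8001dc78fe00400e03c7, 0x7d12a2564ac35872fa2544af7d13a2539beb7d1, 0x400000008000000000000000000000040000000, 0x122fb386fb386a45ce1a917d386a45f786a45f6, 0x528d8abe944cc7bdfa58370c663de4a658370ef, 0x4f15d2c6f748dea8bd9237a8185fcb1f246f54c, 0x616a6f932d47f2602d47f262a3bd30b26168ef9, 0x100000002000000040000000, 0x56864fbe2b4327d64fb8ad0193ee2b55a193ee, 0x417795cb805de573e5c92e70b2cee5c4bbcae5c, 0x5ceee635e6b484282b5cefe4d290852ed210a56, 0x4259a59f59f19f1af8dd8dd6cf8cf8dba84a84b, 0x400000000000000100000000000000040000000,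 0x7cd215da42bb1f3690aec7d63e690acaec7cd2, 0x6f4b735b9adc44ab987cc3f565e96e6d87ecbd2, 0x727cbf2fcbf2bc2ec2308c209b27cbf5db74d93, 0x71baf8dd7c6e3e3659f12cfb1bab8dd0dd446ea, 0x8000000100000002000000040000000, 0x290aec7cb1f3485785763e69b1f34857b1f3485, 0x6f2ee5caf05c92f372e7782d782e497f95c02b2, 0x66210c7ae52db53810c7ae51ee53fb557a96fad, 0x6c7cf9a44857aec63e68d2174854aec34850aec, 0x40000000, 0x19f1ba84f1ba84b3dd4259f18dd4259c4b3e375, 0x6735d481e9b708ebdc23a990ea40f4fdf7287a6, 0x743f805eaa8501562fa016a900bd550d4157ff5, 0x670d06a4522f17d870d46a461a9148ba2fb7d9c, 0x400000008000000100000000000000000000000, 0x2fa2561c8958737ddf44ac386fa2561c737d12b, 0x77c55a349ef8b9074cc27be113309effd713309, 0x612d538d97427eee8d9fc259ae71b2ee5518d9f, 0x7cd2763e42bbcd2090aff34a3e6abb1aec7c857, 0x8000000000000000000000000000000, 0x10967c6eba84b3e3cf8dd42412cf8dd659f1ba8, 0x6e59700ae72e59719782ee71965c02bf2e015ca, 0x6acfca0fca0b83180c669d658319a55f19a559b,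 0x7a2537d139be61ccc39a561ec39a561ab0e0958, 0x2000000040000000, 0x21a917d9f670d48ba45f670cce1a917e45f670d, 0x41c9186fe71e0725461bfdc58f81db14c37fb8f, 0x53fd6121da9be3986121da997c7227dfb515872, 0x4fb8d68627dc2b42ad0c4fba2b4193ebee2da19, 0x400000000000000000000002000000000000000, 0x3c985a8ef2616a3b3be4c2d50b51df27e4c2d47, 0x53db99a4ea9075cb341d520c6693a344ea9075c]

def rvF (k : Nat) : Nat := rvL.getD k 0
def sF (k : Nat) : Nat := sL.getD k 0
def uF (k : Nat) : Nat := uL.getD k 0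
def vF (k : Nat) : Nat := vL.getD k 0

lemma hfN_lt : fN < 2 ^ 200 := by decide
lemma hrv1 : rvF 1 = 4 := by decide
lemma hrv_lt : ∀ k, k < 78 → rvF k < 2 ^ 200 := by decide
lemma hs_lt : ∀ k, k < 77 → sF k < 2 ^ 200 := by decide
lemma hu_lt : ∀ k, k < 78 → uF k < 2 ^ 200 := by decide
lemma hv_lt : ∀ k, k < 78 → vF k < 2 ^ 200 := by decide
lemma hstep : ∀ k, k < 77 → 1 ≤ k → cm 200 (rvF k) (rvF k) ^^^ rvF (k+1) = cm 200 (sF k) fN := by decide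
lemma hbez : ∀ k, k < 78 → 1 ≤ k → cm 200 (uF k) fN ^^^ cm 200 (vF k) (rvF k ^^^ 2) = 1 := by decide

noncomputable def pn (n : Nat) : Polynomial (ZMod 2) := toP 400 n

lemma pn_xor (a b : Nat) : pn (a ^^^ b) = pn a + pn b := toP_xor 400 a b

lemma pn_mul {a b : Nat} (ha : a < 2 ^ 200) (hb : b < 2 ^ 200) :
    pn (cm 200 a b) = pn a * pn b := by
  have h := toP_cm 200 200 a b hb
  have e1 : toP 400 a = toP 200 a := toP_le (by norm_num) ha
  have e2 : toP 400 b = toP 200 b := toP_le (by norm_num) hb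
  show toP 400 (cm 200 a b) = toP 400 a * toP 400 b
  rw [e1, e2, ← h]

lemma pn_pow2 {k : Nat} (h : k < 400) : pn (2 ^ k) = X ^ k := toP_pow2 k 400 h

lemma pn_one : pn 1 = 1 := by
  have := pn_pow2 (k := 0) (by norm_num)
  simpa using this

lemma pn_X : pn 2 = X := by
  have := pn_pow2 (k := 1) (by norm_num)
  simpa using this

lemma two_eq_zeroP : (2 : Polynomial (ZMod 2)) = 0 := by
  exact_mod_cast CharP.cast_eq_zero (Polynomial (ZMod 2)) 2

lemma q_eq : (X ^ 155 + X ^ 93 + X ^ 62 + X ^ 31 + 1 : Polynomial (ZMod 2)) = pn fN := by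
  have h : fN = 2 ^ 155 ^^^ (2 ^ 93 ^^^ (2 ^ 62 ^^^ (2 ^ 31 ^^^ 2 ^ 0))) := by decide
  rw [h, pn_xor, pn_xor, pn_xor, pn_xor,
    pn_pow2 (by norm_num), pn_pow2 (by norm_num), pn_pow2 (by norm_num),
    pn_pow2 (by norm_num), pn_pow2 (by norm_num)]
  ring

lemma chain : ∀ k, 1 ≤ k → k ≤ 77 → pn fN ∣ X ^ (2 ^ k) - pn (rvF k) := by
  intro k
  induction k with
  | zero => omega
  | succ k IH =>
    intro _ hk
    by_cases hk0 : k = 0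
    · subst hk0
      have h4 : pn (rvF 1) = X ^ 2 := by
        rw [hrv1, show (4 : Nat) = 2 ^ 2 by norm_num, pn_pow2 (by norm_num)]
      rw [h4, show (2 : Nat) ^ 1 = 2 by norm_num, sub_self]
      exact dvd_zero _
    · have h1k : 1 ≤ k := by omega
      have IH' := IH h1k (by omega)
      have hrvk := hrv_lt k (by omega)
      have hsk := hs_lt k (by omega)
      have hcm : cm 200 (rvF k) (rvF k) = cm 200 (sF k) fN ^^^ rvF (k+1) := by
        have h := hstep k (by omega) h1k
        rw [← h]
        exact (Nat.xor_xor_cancel_right _ _).symm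
      have e1 : pn (rvF k) ^ 2 = pn (sF k) * pn fN + pn (rvF (k+1)) := by
        rw [sq, ← pn_mul hrvk hrvk, hcm, pn_xor, pn_mul hsk hfN_lt]
      have e2 : (X : Polynomial (ZMod 2)) ^ (2 ^ (k+1)) = (X ^ (2 ^ k)) ^ 2 := by
        rw [← pow_mul, pow_succ]
      have key : (X : Polynomial (ZMod 2)) ^ (2 ^ (k+1)) - pn (rvF (k+1)) =
          (X ^ (2 ^ k) - pn (rvF k)) ^ 2 + pn (sF k) * pn fN := by
        linear_combination e2 - e1 +
          (X ^ (2 ^ k) * pn (rvF k) - pn (rvF (k+1)) - pn (sF k) * pn fN) * two_eq_zeroP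
      rw [key]
      exact dvd_add (dvd_pow IH' (by norm_num)) (dvd_mul_left _ _)

lemma irred_dvd_aux (g : Polynomial (ZMod 2)) (hg : Irreducible g) :
    g ∣ X ^ (2 ^ g.natDegree) - X := by
  haveI : Fact (Irreducible g) := ⟨hg⟩
  have hg0 : g ≠ 0 := hg.ne_zero
  let pb := AdjoinRoot.powerBasis hg0
  haveI : Fintype (AdjoinRoot g) := Fintype.ofEquiv _ pb.basis.equivFun.toEquiv.symm
  have hcard : Fintype.card (AdjoinRoot g) = 2 ^ g.natDegree := by
    have hdim : pb.dim = g.natDegree := rfl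
    rw [Module.card_fintype pb.basis, ZMod.card, Fintype.card_fin, hdim]
  have hroot := FiniteField.pow_card (AdjoinRoot.root g)
  rw [← AdjoinRoot.mk_eq_zero, map_sub, map_pow, AdjoinRoot.mk_X, ← hcard, hroot, sub_self]

lemma no_small_factor (c : Polynomial (ZMod 2)) (hdvd : c ∣ pn fN)
    (h1 : 1 ≤ c.natDegree) (h77 : c.natDegree ≤ 77) : False := by
  obtain ⟨g, hgm, hgi, hgc⟩ :=
    c.exists_monic_irreducible_factor (Polynomial.not_isUnit_of_natDegree_pos c (by omega))
  have hgQN : g ∣ pn fN := hgc.trans hdvd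
  have hd1 : 1 ≤ g.natDegree := hgi.natDegree_pos
  have hc0 : c ≠ 0 := fun h => by simp [h] at h1
  have hd77 : g.natDegree ≤ 77 := le_trans (Polynomial.natDegree_le_of_dvd hgc hc0) h77
  set d := g.natDegree with hd
  have h1dvd : g ∣ X ^ (2 ^ d) - X := irred_dvd_aux g hgi
  have h2dvd : g ∣ X ^ (2 ^ d) - pn (rvF d) := dvd_trans hgQN (chain d hd1 hd77)
  have h3 : g ∣ pn (rvF d ^^^ 2) := by
    have hrw : pn (rvF d ^^^ 2) = (X ^ (2 ^ d) - pn (rvF d)) - (X ^ (2 ^ d) - X) := by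
      rw [pn_xor, pn_X]
      linear_combination pn (rvF d) * two_eq_zeroP
    rw [hrw]
    exact dvd_sub h2dvd h1dvd
  have hb := hbez d (by omega) hd1
  have hBez : pn (uF d) * pn fN + pn (vF d) * pn (rvF d ^^^ 2) = 1 := by
    rw [← pn_mul (hu_lt d (by omega)) hfN_lt,
      ← pn_mul (hv_lt d (by omega)) (Nat.xor_lt_two_pow (hrv_lt d (by omega)) (by norm_num)),
      ← pn_xor, hb, pn_one]
  have hone : g ∣ 1 := by
    rw [← hBez]
    exact dvd_add (hgQN.mul_left _) (h3.mul_left _)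
  exact hgi.not_isUnit (isUnit_of_dvd_one hone)

end Stmt5Aux

open Stmt5Aux in
theorem stmt5 :
    Irreducible (X ^ 155 + X ^ 93 + X ^ 62 + X ^ 31 + 1 : Polynomial (ZMod 2)) := by
  have hq := q_eq
  have hdeg : (pn fN).natDegree = 155 := by
    rw [← hq]
    compute_degree!
  have hne : pn fN ≠ 0 := fun h => by simp [h] at hdeg
  rw [hq]
  constructor
  · intro hu
    have := Polynomial.natDegree_eq_zero_of_isUnit hu
    omega
  · intro a b hab
    by_contra hcon
    push_neg at hcon
    obtain ⟨ha, hb⟩ := hcon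
    have ha0 : a ≠ 0 := by rintro rfl; rw [zero_mul] at hab; exact hne hab
    have hb0 : b ≠ 0 := by rintro rfl; rw [mul_zero] at hab; exact hne hab
    have hdeg2 : a.natDegree + b.natDegree = 155 := by
      rw [← Polynomial.natDegree_mul ha0 hb0, ← hab, hdeg]
    have hnd : ∀ p : Polynomial (ZMod 2), p ≠ 0 → ¬ IsUnit p → 1 ≤ p.natDegree := by
      intro p hp0 hpu
      by_contra h
      push_neg at h
      obtain ⟨u, rfl⟩ := (Polynomial.natDegree_eq_zero (p := p)).mp (by omega)
      exact hpu (Polynomial.isUnit_C.mpr (isUnit_iff_ne_zero.mpr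
        (fun hu0 => hp0 (by rw [hu0, map_zero]))))
    have ha1 := hnd a ha0 ha
    have hb1 := hnd b hb0 hb
    rcases le_or_gt a.natDegree 77 with h | h
    · exact no_small_factor a ⟨b, hab⟩ ha1 h
    · exact no_small_factor b ⟨a, by rw [hab, mul_comm]⟩ hb1 (by omega)
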